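/- Let E be a metric space. Then UC_b(E) ≠ C_b(E) (i.e., there exists a bounded continuous function on E which is not uniformly continuous) if and only if there exists a sequence {(x_n, y_n)} in E × E such that: (i) d(x_n, y_n) > 0 for all n and d(x_n, y_n) → 0; (ii) for every n, the distance from the pair set {x_n, y_n} to the union ⋃_{k>n} {x_k, y_k} is strictly positive; (iii) the sequence {x_n} has no convergent subsequence. -/

import Mathlib

open Filter Topology


lemma aux_no_acc {E : Type*} [MetricSpace E] (x y : ℕ → E)
    (hd : Tendsto (fun n => dist (x n) (y n)) atTop (𝓝 0))
    (hno : ¬ ∃ φ : ℕ → ℕ, StrictMono φ ∧ ∃ a : E,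
        Tendsto (fun k => x (φ k)) atTop (𝓝 a)) (a : E) :
    ∃ ε > (0:ℝ), ∃ N : ℕ, ∀ k ≥ N, ε ≤ dist a (x k) ∧ ε ≤ dist a (y k) := by
  by_contra h
  push_neg at h
  have hfreq : ∀ m : ℕ, ∃ᶠ k in atTop,
      dist a (x k) < 1/(m+1) ∨ dist a (y k) < 1/(m+1) := by
    intro m
    rw [frequently_atTop]
    intro N
    obtain ⟨k, hk, hk'⟩ := h (1/(m+1)) (by positivity) N
    rcases le_or_gt (1/((m:ℝ)+1)) (dist a (x k)) with h1 | h2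
    · exact ⟨k, hk, Or.inr (hk' h1)⟩
    · exact ⟨k, hk, Or.inl h2⟩
  obtain ⟨φ, hφ, hP⟩ := extraction_forall_of_frequently hfreq
  apply hno
  refine ⟨φ, hφ, a, ?_⟩
  rw [tendsto_iff_dist_tendsto_zero]
  have hb : ∀ k, dist (x (φ k)) a ≤ 1/(k+1) + dist (x (φ k)) (y (φ k)) := by
    intro k
    rcases hP k with h1 | h2
    · rw [dist_comm] at h1
      nlinarith [dist_nonneg (x := x (φ k)) (y := y (φ k))]
    · have := dist_triangle (x (φ k)) (y (φ k)) a
      rw [dist_comm a (y (φ k))] at h2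
      linarith
  have hlim : Tendsto (fun k : ℕ => 1/((k:ℝ)+1) + dist (x (φ k)) (y (φ k))) atTop (𝓝 0) := by
    have h1 := tendsto_one_div_add_atTop_nhds_zero_nat (𝕜 := ℝ)
    have h2 : Tendsto (fun k => dist (x (φ k)) (y (φ k))) atTop (𝓝 0) :=
      hd.comp hφ.tendsto_atTop
    simpa using h1.add h2
  exact squeeze_zero (fun k => dist_nonneg) hb hlim


/-- UC_b(E) ≠ C_b(E) iff there is a sequence of pairs (x_n, y_n) with
d(x_n,y_n) > 0 tending to 0, with each pair-set at positive distance from all later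
pairs, and with {x_n} having no convergent subsequence. -/
theorem stmt12 {E : Type*} [MetricSpace E] :
    (∃ f : BoundedContinuousFunction E ℝ, ¬ UniformContinuous ⇑f) ↔
      ∃ x y : ℕ → E,
        ((∀ n, 0 < dist (x n) (y n)) ∧
          Tendsto (fun n => dist (x n) (y n)) atTop (𝓝 0)) ∧
        (∀ n, ∃ δ > (0 : ℝ), ∀ k, n < k →
          δ ≤ dist (x n) (x k) ∧ δ ≤ dist (x n) (y k) ∧
          δ ≤ dist (y n) (x k) ∧ δ ≤ dist (y n) (y k)) ∧
        ¬ ∃ φ : ℕ → ℕ, StrictMono φ ∧ ∃ a : E,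
            Tendsto (fun k => x (φ k)) atTop (𝓝 a) := by
  constructor
  · rintro ⟨f, hf⟩
    rw [Metric.uniformContinuous_iff] at hf
    push_neg at hf
    obtain ⟨ε, hε, H⟩ := hf
    have H' : ∀ n : ℕ, ∃ a b : E, dist a b < 1/(n+1) ∧ ε ≤ dist (f a) (f b) :=
      fun n => H (1/(n+1)) (by positivity)
    choose x0 y0 hdist hfar using H'
    -- basic facts
    have hd0 : Tendsto (fun n => dist (x0 n) (y0 n)) atTop (𝓝 0) := by
      refine squeeze_zero (fun n => dist_nonneg) (fun n => (hdist n).le) ?_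
      exact tendsto_one_div_add_atTop_nhds_zero_nat
    have hne : ∀ n, 0 < dist (x0 n) (y0 n) := by
      intro n
      rcases eq_or_lt_of_le (dist_nonneg (x := x0 n) (y := y0 n)) with h | h
      · exfalso
        have hxy : x0 n = y0 n := by rw [← dist_le_zero]; exact h.ge
        have := hfar n
        rw [hxy, dist_self] at this
        linarith
      · exact h
    have hno : ¬ ∃ φ : ℕ → ℕ, StrictMono φ ∧ ∃ a : E,
        Tendsto (fun k => x0 (φ k)) atTop (𝓝 a) := by
      rintro ⟨φ, hφ, a, ha⟩
      have hdφ : Tendsto (fun k => dist (x0 (φ k)) (y0 (φ k))) atTop (𝓝 0) :=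
        hd0.comp hφ.tendsto_atTop
      have hy : Tendsto (fun k => y0 (φ k)) atTop (𝓝 a) := by
        rw [tendsto_iff_dist_tendsto_zero]
        refine squeeze_zero (fun k => dist_nonneg)
          (fun k => dist_triangle (y0 (φ k)) (x0 (φ k)) a) ?_
        have ha' : Tendsto (fun k => dist (x0 (φ k)) a) atTop (𝓝 0) :=
          tendsto_iff_dist_tendsto_zero.mp ha
        have : Tendsto (fun k => dist (y0 (φ k)) (x0 (φ k))) atTop (𝓝 0) := by
          simpa [dist_comm] using hdφ
        simpa using this.add ha'
      have hfx : Tendsto (fun k => f (x0 (φ k))) atTop (𝓝 (f a)) :=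
        (f.continuous.tendsto a).comp ha
      have hfy : Tendsto (fun k => f (y0 (φ k))) atTop (𝓝 (f a)) :=
        (f.continuous.tendsto a).comp hy
      have hdf : Tendsto (fun k => dist (f (x0 (φ k))) (f (y0 (φ k)))) atTop (𝓝 0) := by
        simpa using hfx.dist hfy
      have : ε ≤ 0 := ge_of_tendsto hdf (Eventually.of_forall fun k => hfar (φ k))
      linarith
    -- extraction
    have key : ∀ a : E, ∃ N : ℕ, ∃ ε' > (0:ℝ), ∀ k ≥ N, ε' ≤ dist a (x0 k) ∧ ε' ≤ dist a (y0 k) := by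
      intro a
      obtain ⟨ε', hε', N, hN⟩ := aux_no_acc x0 y0 hd0 hno a
      exact ⟨N, ε', hε', hN⟩
    choose g hg using key
    set φ : ℕ → ℕ := fun m => Nat.rec 0
      (fun m p => max (p+1) (max (g (x0 p)) (g (y0 p)))) m with hφdef
    have hφsucc : ∀ m, φ (m+1) = max (φ m + 1) (max (g (x0 (φ m))) (g (y0 (φ m)))) :=
      fun m => rfl
    have hφmono : StrictMono φ := by
      apply strictMono_nat_of_lt_succ
      intro m
      rw [hφsucc]
      exact lt_of_lt_of_le (Nat.lt_succ_self _) (le_max_left _ _)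
    have hφprop : ∀ n k, n < k → g (x0 (φ n)) ≤ φ k ∧ g (y0 (φ n)) ≤ φ k := by
      intro n k hnk
      have h1 : max (g (x0 (φ n))) (g (y0 (φ n))) ≤ φ (n+1) := by
        rw [hφsucc]; exact le_max_right _ _
      have h2 : φ (n+1) ≤ φ k := hφmono.monotone hnk
      constructor
      · exact le_trans (le_trans (le_max_left _ _) h1) h2
      · exact le_trans (le_trans (le_max_right _ _) h1) h2
    refine ⟨fun n => x0 (φ n), fun n => y0 (φ n), ⟨fun n => hne (φ n), ?_⟩, ?_, ?_⟩
    · exact hd0.comp hφmono.tendsto_atTop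
    · intro n
      obtain ⟨εx, hεx, hx⟩ := hg (x0 (φ n))
      obtain ⟨εy, hεy, hy⟩ := hg (y0 (φ n))
      refine ⟨min εx εy, lt_min hεx hεy, fun k hk => ?_⟩
      obtain ⟨h1, h2⟩ := hφprop n k hk
      obtain ⟨hx1, hx2⟩ := hx (φ k) h1
      obtain ⟨hy1, hy2⟩ := hy (φ k) h2
      exact ⟨(min_le_left _ _).trans hx1, (min_le_left _ _).trans hx2,
        (min_le_right _ _).trans hy1, (min_le_right _ _).trans hy2⟩
    · rintro ⟨ψ, hψ, a, ha⟩
      exact hno ⟨φ ∘ ψ, hφmono.comp hψ, a, ha⟩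
  · rintro ⟨x, y, ⟨h1, h1'⟩, h2, h3⟩
    choose δ hδpos hδ using h2
    set r : ℕ → ℝ := fun n => (1/2) * min (dist (x n) (y n))
      ((Finset.range (n+1)).inf' Finset.nonempty_range_add_one δ) with hrdef
    have hr_pos : ∀ n, 0 < r n := by
      intro n
      apply mul_pos (by norm_num)
      apply lt_min (h1 n)
      rw [Finset.lt_inf'_iff]
      exact fun i _ => hδpos i
    have hr_le_d : ∀ n, 2 * r n ≤ dist (x n) (y n) := by
      intro n
      have := min_le_left (dist (x n) (y n))
        ((Finset.range (n+1)).inf' Finset.nonempty_range_add_one δ)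
      rw [hrdef]; dsimp only; linarith
    have hr_le_δ : ∀ m n, m ≤ n → 2 * r n ≤ δ m := by
      intro m n hmn
      have h1'' : (Finset.range (n+1)).inf' Finset.nonempty_range_add_one δ ≤ δ m :=
        Finset.inf'_le δ (Finset.mem_range.mpr (Nat.lt_succ_of_le hmn))
      have := min_le_right (dist (x n) (y n))
        ((Finset.range (n+1)).inf' Finset.nonempty_range_add_one δ)
      rw [hrdef]; dsimp only; linarith
    have hr_to_0 : Tendsto r atTop (𝓝 0) := by
      apply squeeze_zero (fun n => (hr_pos n).le) (fun n => ?_) h1'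
      · have := hr_le_d n
        nlinarith [hr_pos n]
    set g : ℕ → E → ℝ := fun n p => max 0 (1 - dist p (y n) / r n) with hgdef
    have hg_nonneg : ∀ n p, 0 ≤ g n p := fun n p => le_max_left _ _
    have hg_le_one : ∀ n p, g n p ≤ 1 := by
      intro n p
      apply max_le (by norm_num)
      have : 0 ≤ dist p (y n) / r n := div_nonneg dist_nonneg (hr_pos n).le
      linarith
    have hg_cont : ∀ n, Continuous (g n) :=
      fun n => continuous_const.max (continuous_const.sub
        ((continuous_id.dist continuous_const).div_const _))
    have hg_self : ∀ n, g n (y n) = 1 := by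
      intro n; simp [hgdef]
    have hg_vanish : ∀ n p, r n ≤ dist p (y n) → g n p = 0 := by
      intro n p hp
      apply max_eq_left
      have : 1 ≤ dist p (y n) / r n := (one_le_div (hr_pos n)).mpr hp
      linarith
    have hbdd : ∀ p, BddAbove (Set.range fun n => g n p) := by
      intro p
      exact ⟨1, by rintro _ ⟨n, rfl⟩; exact hg_le_one n p⟩
    set F : E → ℝ := fun p => ⨆ n, g n p with hFdef
    have hF_le_one : ∀ p, F p ≤ 1 := fun p => ciSup_le fun n => hg_le_one n p
    have hF_nonneg : ∀ p, 0 ≤ F p := fun p =>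
      (hg_nonneg 0 p).trans (le_ciSup (hbdd p) 0)
    have hFy : ∀ n, F (y n) = 1 := by
      intro n
      refine le_antisymm (hF_le_one _) ?_
      rw [← hg_self n]
      exact le_ciSup (hbdd (y n)) n
    have hFx : ∀ n, F (x n) = 0 := by
      intro n
      refine le_antisymm (ciSup_le fun m => ?_) (hF_nonneg _)
      rcases lt_trichotomy m n with h | h | h
      · -- m < n : δ m ≤ dist (y m) (x n), and 2 r m ≤ δ m
        have hd := (hδ m n h).2.2.1
        have := hr_le_δ m m le_rfl
        have : r m ≤ dist (x n) (y m) := by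
          rw [dist_comm]; nlinarith [hr_pos m]
        rw [hg_vanish m (x n) this]
      · subst h
        have := hr_le_d m
        have : r m ≤ dist (x m) (y m) := by nlinarith [hr_pos m]
        rw [hg_vanish m (x m) this]
      · -- n < m : δ n ≤ dist (x n) (y m), 2 r m ≤ δ n
        have hd := (hδ n m h).2.1
        have := hr_le_δ n m h.le
        have : r m ≤ dist (x n) (y m) := by nlinarith [hr_pos m]
        rw [hg_vanish m (x n) this]
    -- continuity
    have hF_cont : Continuous F := by
      rw [continuous_iff_continuousAt]
      intro p
      obtain ⟨ε, hε, N0, hN0⟩ := aux_no_acc x y h1' h3 p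
      obtain ⟨N1, hN1⟩ := Metric.tendsto_atTop.mp hr_to_0 (ε/4) (by linarith)
      set M := max N0 N1 with hM
      have hvan : ∀ q ∈ Metric.ball p (ε/2), ∀ k, M ≤ k → g k q = 0 := by
        intro q hq k hk
        apply hg_vanish
        have hk0 : N0 ≤ k := le_trans (le_max_left _ _) hk
        have hk1 : N1 ≤ k := le_trans (le_max_right _ _) hk
        have h1k := (hN0 k hk0).2
        have h2k := hN1 k hk1
        rw [Real.dist_eq, abs_sub_lt_iff] at h2k
        have hq' : dist p q < ε/2 := by
          rw [Metric.mem_ball, dist_comm] at hq; exact hq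
        have := dist_triangle p q (y k)
        linarith
      have hfin : ∀ q ∈ Metric.ball p (ε/2),
          F q = (Finset.range (M+1)).sup' Finset.nonempty_range_add_one (fun n => g n q) := by
        intro q hq
        refine le_antisymm (ciSup_le fun n => ?_) (Finset.sup'_le _ _ fun n _ => le_ciSup (hbdd q) n)
        rcases le_or_gt n M with h | h
        · exact Finset.le_sup' (fun n => g n q) (Finset.mem_range.mpr (Nat.lt_succ_of_le h))
        · rw [hvan q hq n h.le]
          have : g M q = 0 := hvan q hq M le_rfl
          rw [← this]
          exact Finset.le_sup' (fun n => g n q) (Finset.self_mem_range_succ M)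
      have hGc : ContinuousAt (fun q => (Finset.range (M+1)).sup'
          Finset.nonempty_range_add_one (fun n => g n q)) p :=
        ContinuousAt.finset_sup'_apply _ (fun n _ => (hg_cont n).continuousAt)
      apply hGc.congr
      filter_upwards [Metric.ball_mem_nhds p (by positivity : (0:ℝ) < ε/2)] with q hq
      exact (hfin q hq).symm
    -- assemble
    refine ⟨BoundedContinuousFunction.mkOfBound ⟨F, hF_cont⟩ 1 (fun a b => ?_), ?_⟩
    · rw [Real.dist_eq, abs_sub_le_iff]
      constructor <;> [skip; skip] <;>
        · have := hF_le_one a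
          have := hF_nonneg a
          have := hF_le_one b
          have := hF_nonneg b
          simp only [ContinuousMap.coe_mk]
          linarith
    · intro hUC
      rw [Metric.uniformContinuous_iff] at hUC
      obtain ⟨η, hη, hη'⟩ := hUC 1 (by norm_num)
      obtain ⟨N, hN⟩ := Metric.tendsto_atTop.mp h1' η hη
      have hn := hN N le_rfl
      rw [Real.dist_eq, sub_zero, abs_of_pos (h1 N)] at hn
      have hcontra := hη' hn
      have hcontra' : dist (F (x N)) (F (y N)) < 1 := hcontra
      rw [hFx N, hFy N] at hcontra'
      rename' hcontra' => hcontra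
      norm_num [Real.dist_eq] at hcontra
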